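/- Let A be a commutative Noetherian ring and J ⊆ A a finitely generated ideal such that J/J² is generated by n elements as an A/J-module. Then for any a ∈ A, the ideal J + (a) is generated by n+1 elements. -/
import Mathlib


/-- Mohan Kumar's lemma: if `J/J²` is generated by `n` elements, then for any
`a ∈ A`, the ideal `J + (a)` is generated by `n + 1` elements. -/
theorem mohan_kumar_lemma {A : Type*} [CommRing A] [IsNoetherianRing A]
    (J : Ideal A) (hJ : J.FG) (n : ℕ)
    (hgen : ∃ g : Fin n → J.Cotangent, Submodule.span A (Set.range g) = ⊤)
    (a : A) :
    ∃ h : Fin (n + 1) → A, Ideal.span (Set.range h) = J ⊔ Ideal.span {a} := by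
  obtain ⟨g, hg⟩ := hgen
  -- lift generators of the cotangent space to elements of J
  choose x hx using fun i => J.toCotangent_surjective (g i)
  set I : Ideal A := Ideal.span (Set.range fun i => (x i : A)) with hI
  have hIJ : I ≤ J := by
    rw [hI, Ideal.span_le]
    rintro _ ⟨i, rfl⟩; exact (x i).2
  -- J ≤ I ⊔ J^2
  have hJI2 : J ≤ I ⊔ J ^ 2 := by
    intro y hy
    have h1 : Submodule.map J.toCotangent (Submodule.span A (Set.range x)) = ⊤ := by
      rw [Submodule.map_span, ← Set.range_comp]
      have : (J.toCotangent ∘ x) = g := funext hx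
      rw [this, hg]
    have h2 : (⟨y, hy⟩ : J) ∈ Submodule.span A (Set.range x) ⊔ LinearMap.ker J.toCotangent := by
      rw [← Submodule.comap_map_eq, h1]; exact Submodule.mem_comap.mpr trivial
    obtain ⟨s, hs, k, hk, hsk⟩ := Submodule.mem_sup.mp h2
    have hsA : (s : A) ∈ I := by
      have := Submodule.mem_map_of_mem (f := J.subtype) hs
      rw [Submodule.map_span, ← Set.range_comp] at this
      exact this
    have hkA : (k : A) ∈ J ^ 2 := J.mem_toCotangent_ker.mp hk
    have : y = (s : A) + (k : A) := by
      have := congrArg (Subtype.val) hsk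
      simpa using this.symm
    rw [this]
    exact Submodule.add_mem _ (Ideal.mem_sup_left hsA) (Ideal.mem_sup_right hkA)
  -- pass to the quotient A/I
  set mk := Ideal.Quotient.mk I with hmk
  set K : Ideal (A ⧸ I) := J.map mk with hK
  have hKfg : K.FG := Ideal.FG.map hJ mk
  have hKK : K ≤ K • K := by
    rw [smul_eq_mul, ← pow_two, hK, ← Ideal.map_pow]
    calc J.map mk ≤ (I ⊔ J ^ 2).map mk := Ideal.map_mono hJI2
      _ = I.map mk ⊔ (J ^ 2).map mk := by rw [Ideal.map_sup]
      _ = (J ^ 2).map mk := by rw [Ideal.map_quotient_self, bot_sup_eq]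
  obtain ⟨r, hr1, hr0⟩ :=
    Submodule.exists_sub_one_mem_and_smul_eq_zero_of_fg_of_le_smul K K hKfg hKK
  have he' : (1 : A ⧸ I) - r ∈ K := by
    have := K.neg_mem hr1; simpa using this
  obtain ⟨e, heJ, hee⟩ := Ideal.mem_map_iff_of_surjective mk Ideal.Quotient.mk_surjective |>.mp he'
  -- key property: (1 - e) * y ∈ I for all y ∈ J
  have key : ∀ y ∈ J, (1 - e) * y ∈ I := by
    intro y hy
    rw [← Ideal.Quotient.eq_zero_iff_mem]
    have : mk ((1 - e) * y) = r * mk y := by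
      rw [map_mul, map_sub, map_one, hee]; ring_nf
    rw [this]
    exact hr0 (mk y) (Ideal.mem_map_of_mem mk hy)
  -- the generators
  refine ⟨Fin.snoc (fun i => (x i : A)) (e + a * (1 - e)), ?_⟩
  set S := Ideal.span (Set.range (Fin.snoc (fun i => (x i : A)) (e + a * (1 - e)) : Fin (n+1) → A))
    with hS
  have hIS : I ≤ S := by
    rw [hI, Ideal.span_le]
    rintro _ ⟨i, rfl⟩
    apply Ideal.subset_span
    exact ⟨i.castSucc, by simp⟩
  have hlastS : e + a * (1 - e) ∈ S := by
    apply Ideal.subset_span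
    exact ⟨Fin.last n, by simp⟩
  have heS : e ∈ S := by
    have h1 : (1 - e) * e ∈ I := key e heJ
    have h2 : e * (e + a * (1 - e)) ∈ S := Ideal.mul_mem_left _ _ hlastS
    have : e = (1 - e) * e + (e * (e + a * (1 - e)) - a * ((1 - e) * e)) := by ring
    rw [this]
    exact Submodule.add_mem _ (hIS h1)
      (Submodule.sub_mem _ h2 (hIS (Ideal.mul_mem_left _ _ h1)))
  have hJS : J ≤ S := by
    intro y hy
    have : y = (1 - e) * y + e * y := by ring
    rw [this]
    exact Submodule.add_mem _ (hIS (key y hy)) (Ideal.mul_mem_right _ _ heS)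
  have haS : a ∈ S := by
    have : a = (e + a * (1 - e)) - e + a * e := by ring
    rw [this]
    exact Submodule.add_mem _ (Submodule.sub_mem _ hlastS heS) (Ideal.mul_mem_left _ _ heS)
  apply le_antisymm
  · rw [hS, Ideal.span_le]
    rintro _ ⟨i, rfl⟩
    induction i using Fin.lastCases with
    | last =>
      simp only [Fin.snoc_last]
      refine Submodule.add_mem _ (Ideal.mem_sup_left heJ) ?_
      refine Ideal.mem_sup_right ?_
      have : a * (1 - e) = (1 - e) * a := by ring
      rw [this]
      exact Ideal.mul_mem_left _ _ (Ideal.mem_span_singleton_self a)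
    | cast j =>
      simp only [Fin.snoc_castSucc]
      exact Ideal.mem_sup_left (x j).2
  · rw [sup_le_iff]
    refine ⟨hJS, ?_⟩
    rw [Ideal.span_le, Set.singleton_subset_iff]
    exact haS
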